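/- For distinct positive reals x₁ ≠ x₂, the two-variable Lehmer mean L(p) = (x₁^p + x₂^p)/(x₁^(p-1) + x₂^(p-1)) satisfies L''(p) > 0 for p < 1, L''(1) = 0, and L''(p) < 0 for p > 1; in particular p = 1 is the unique inflection point. -/

import Mathlib

open Real

theorem lehmer_two_inflection (x₁ x₂ : ℝ) (hx₁ : 0 < x₁) (hx₂ : 0 < x₂)
    (hne : x₁ ≠ x₂) :
    (∀ p : ℝ, p < 1 → 0 < iteratedDeriv 2
        (fun q : ℝ => (x₁ ^ q + x₂ ^ q) / (x₁ ^ (q - 1) + x₂ ^ (q - 1))) p) ∧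
    iteratedDeriv 2
        (fun q : ℝ => (x₁ ^ q + x₂ ^ q) / (x₁ ^ (q - 1) + x₂ ^ (q - 1))) 1 = 0 ∧
    (∀ p : ℝ, 1 < p → iteratedDeriv 2
        (fun q : ℝ => (x₁ ^ q + x₂ ^ q) / (x₁ ^ (q - 1) + x₂ ^ (q - 1))) p < 0) := by
  set A := Real.log x₁ with hA
  set B := Real.log x₂ with hB
  set c : ℝ := (A - B) / 2 with hc
  set m : ℝ := (A + B) / 2 with hm
  have hcne : c ≠ 0 := by
    simp only [hc, div_ne_zero_iff, sub_ne_zero]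
    exact ⟨fun h => hne (Real.log_injOn_pos (Set.mem_Ioi.2 hx₁) (Set.mem_Ioi.2 hx₂) h),
      by norm_num⟩
  -- key: the sum rewrite
  have key : ∀ y : ℝ, Real.exp (A * y) + Real.exp (B * y)
      = Real.exp (m * y) * (2 * Real.cosh (y * c)) := by
    intro y
    rw [Real.cosh_eq]
    have h1 : m * y + y * c = A * y := by rw [hm, hc]; ring
    have h2 : m * y + -(y * c) = B * y := by rw [hm, hc]; ring
    rw [← h1, ← h2, Real.exp_add, Real.exp_add]
    ring
  -- rewrite of the function
  have feq : (fun q : ℝ => (x₁ ^ q + x₂ ^ q) / (x₁ ^ (q - 1) + x₂ ^ (q - 1)))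
      = fun q : ℝ => Real.exp m * (Real.cosh (q * c) / Real.cosh ((q - 1) * c)) := by
    funext q
    rw [Real.rpow_def_of_pos hx₁, Real.rpow_def_of_pos hx₂,
      Real.rpow_def_of_pos hx₁, Real.rpow_def_of_pos hx₂, ← hA, ← hB,
      key q, key (q - 1)]
    have hexp : Real.exp (m * q) = Real.exp m * Real.exp (m * (q - 1)) := by
      rw [← Real.exp_add]; ring_nf
    rw [hexp]
    have h1 := (Real.cosh_pos ((q - 1) * c)).ne'
    have h2 := (Real.exp_pos (m * (q - 1))).ne'
    field_simp
  rw [feq]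
  -- first derivative
  have d1 : ∀ p : ℝ, HasDerivAt
      (fun q : ℝ => Real.exp m * (Real.cosh (q * c) / Real.cosh ((q - 1) * c)))
      (Real.exp m * (c * Real.sinh c) / Real.cosh ((p - 1) * c) ^ 2) p := by
    intro p
    have h1 : HasDerivAt (fun q : ℝ => Real.cosh (q * c)) (Real.sinh (p * c) * c) p := by
      simpa using ((hasDerivAt_id p).mul_const c).cosh
    have h2 : HasDerivAt (fun q : ℝ => Real.cosh ((q - 1) * c))
        (Real.sinh ((p - 1) * c) * c) p := by
      have := (((hasDerivAt_id p).sub_const 1).mul_const c).cosh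
      simpa using this
    have hne2 := (Real.cosh_pos ((p - 1) * c)).ne'
    have hdiv := h1.fun_div h2 hne2
    have : HasDerivAt
        (fun q : ℝ => Real.exp m * (Real.cosh (q * c) / Real.cosh ((q - 1) * c)))
        (Real.exp m * ((Real.sinh (p * c) * c * Real.cosh ((p - 1) * c)
          - Real.cosh (p * c) * (Real.sinh ((p - 1) * c) * c)) / Real.cosh ((p - 1) * c) ^ 2)) p :=
      hdiv.const_mul (Real.exp m)
    convert this using 1
    have hsinh : Real.sinh (p * c) * Real.cosh ((p - 1) * c)
        - Real.cosh (p * c) * Real.sinh ((p - 1) * c) = Real.sinh c := by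
      rw [← Real.sinh_sub]; congr 1; ring
    rw [show Real.sinh (p * c) * c * Real.cosh ((p - 1) * c)
        - Real.cosh (p * c) * (Real.sinh ((p - 1) * c) * c) = c * Real.sinh c by
      rw [← hsinh]; ring]
    ring
  -- deriv (deriv) computation
  have dd : ∀ p : ℝ, iteratedDeriv 2
      (fun q : ℝ => Real.exp m * (Real.cosh (q * c) / Real.cosh ((q - 1) * c))) p
      = -(Real.exp m * (c * Real.sinh c)) *
          (2 * Real.cosh ((p - 1) * c) * (Real.sinh ((p - 1) * c) * c)) /
          (Real.cosh ((p - 1) * c) ^ 2) ^ 2 := by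
    intro p
    rw [show (2 : ℕ) = 1 + 1 from rfl, iteratedDeriv_succ, iteratedDeriv_one]
    have hd1 : deriv (fun q : ℝ => Real.exp m * (Real.cosh (q * c) / Real.cosh ((q - 1) * c)))
        = fun p : ℝ => Real.exp m * (c * Real.sinh c) / Real.cosh ((p - 1) * c) ^ 2 := by
      funext y; exact (d1 y).deriv
    rw [hd1]
    have h2 : HasDerivAt (fun q : ℝ => Real.cosh ((q - 1) * c) ^ 2)
        (2 * Real.cosh ((p - 1) * c) * (Real.sinh ((p - 1) * c) * c)) p := by
      have hbase : HasDerivAt (fun q : ℝ => Real.cosh ((q - 1) * c))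
          (Real.sinh ((p - 1) * c) * c) p := by
        have := (((hasDerivAt_id p).sub_const 1).mul_const c).cosh
        simpa using this
      have := hbase.fun_pow 2
      simpa [mul_comm, mul_assoc, mul_left_comm] using this
    have hne2 : Real.cosh ((p - 1) * c) ^ 2 ≠ 0 :=
      pow_ne_zero 2 (Real.cosh_pos ((p - 1) * c)).ne'
    have hdiv := (hasDerivAt_const p (Real.exp m * (c * Real.sinh c))).fun_div h2 hne2
    rw [hdiv.deriv]
    ring
  -- sign facts
  have hK : 0 < Real.exp m := Real.exp_pos m
  have hcoshpos : ∀ p : ℝ, 0 < (Real.cosh ((p - 1) * c) ^ 2) ^ 2 := fun p =>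
    pow_pos (pow_pos (Real.cosh_pos _) 2) 2
  have csinh_pos : 0 < c * Real.sinh c := by
    rcases lt_or_gt_of_ne hcne with h | h
    · exact mul_pos_of_neg_of_neg h (Real.sinh_neg_iff.2 h)
    · exact mul_pos h (Real.sinh_pos_iff.2 h)
  refine ⟨fun p hp => ?_, ?_, fun p hp => ?_⟩
  · rw [dd p]
    apply div_pos _ (hcoshpos p)
    have hS : Real.sinh c * Real.sinh ((p - 1) * c) < 0 := by
      rcases lt_or_gt_of_ne hcne with h | h
      · exact mul_neg_of_neg_of_pos (Real.sinh_neg_iff.2 h)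
          (Real.sinh_pos_iff.2 (mul_pos_of_neg_of_neg (by linarith) h))
      · exact mul_neg_of_pos_of_neg (Real.sinh_pos_iff.2 h)
          (Real.sinh_neg_iff.2 (mul_neg_of_neg_of_pos (by linarith) h))
    rw [show -(Real.exp m * (c * Real.sinh c)) *
        (2 * Real.cosh ((p - 1) * c) * (Real.sinh ((p - 1) * c) * c))
        = 2 * Real.exp m * c ^ 2 * (-(Real.sinh c * Real.sinh ((p - 1) * c))) *
          Real.cosh ((p - 1) * c) by ring]
    exact mul_pos (mul_pos (mul_pos (mul_pos two_pos hK)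
      (sq_pos_of_ne_zero hcne)) (neg_pos.2 hS)) (Real.cosh_pos _)
  · rw [dd 1]
    simp
  · rw [dd p]
    apply div_neg_of_neg_of_pos _ (hcoshpos p)
    have hS : 0 < Real.sinh c * Real.sinh ((p - 1) * c) := by
      rcases lt_or_gt_of_ne hcne with h | h
      · exact mul_pos_of_neg_of_neg (Real.sinh_neg_iff.2 h)
          (Real.sinh_neg_iff.2 (mul_neg_of_pos_of_neg (by linarith) h))
      · exact mul_pos (Real.sinh_pos_iff.2 h)
          (Real.sinh_pos_iff.2 (mul_pos (by linarith) h))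
    have : 0 < Real.exp m * (c * Real.sinh c) *
        (2 * Real.cosh ((p - 1) * c) * (Real.sinh ((p - 1) * c) * c)) := by
      rw [show Real.exp m * (c * Real.sinh c) *
          (2 * Real.cosh ((p - 1) * c) * (Real.sinh ((p - 1) * c) * c))
          = 2 * Real.exp m * c ^ 2 * (Real.sinh c * Real.sinh ((p - 1) * c)) *
            Real.cosh ((p - 1) * c) by ring]
      exact mul_pos (mul_pos (mul_pos (mul_pos two_pos hK)
        (sq_pos_of_ne_zero hcne)) hS) (Real.cosh_pos _)
    linarith
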